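/- arXiv:0706.1805 — 3 statements merged into one kernel-verified Lean document; each statement's English description precedes it below -/
import Mathlib

section
/- Let M ⊆ T^d be a measurable subset of the d-dimensional torus. Then the set of vectors a ∈ ℝ^d generating irrelevant directions, i.e. {a ∈ ℝ^d : Λ_M(κa) = 0 for all κ ∈ ℝ}, is a linear subspace of ℝ^d. -/
open MeasureTheory Real

noncomputable section

instance : Fact (0 < 2 * π) := ⟨Real.two_pi_pos⟩

/-- The `d`-dimensional torus `(ℝ/2πℤ)^d`, equipped with its (product Lebesgue) measure. -/
abbrev Torus (d : ℕ) := Fin d → AddCircle (2 * π)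

/-- The translate `M + a` of a subset of the torus by a vector `a ∈ ℝ^d`:
`x ∈ M + a ↔ x - a ∈ M`. -/
def torusTranslate (d : ℕ) (M : Set (Torus d)) (a : Fin d → ℝ) : Set (Torus d) :=
  (fun x i => x i - ((a i : ℝ) : AddCircle (2 * π))) ⁻¹' M

/-- `Λ_M(a) = |M \ (M + a)|`, the Lebesgue measure of the part of `M` not covered by its
translate. -/
def Lam (d : ℕ) (M : Set (Torus d)) (a : Fin d → ℝ) : ℝ :=
  (volume (M \ torusTranslate d M a)).toReal

lemma torusTranslate_zero (d : ℕ) (M : Set (Torus d)) : torusTranslate d M 0 = M := by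
  ext x
  simp [torusTranslate]

lemma torusTranslate_add (d : ℕ) (M : Set (Torus d)) (a b : Fin d → ℝ) :
    torusTranslate d M (a + b) = torusTranslate d (torusTranslate d M b) a := by
  ext x
  simp only [torusTranslate, Set.mem_preimage, Pi.add_apply, AddCircle.coe_add, sub_sub]

lemma torusTranslate_measurePreserving (d : ℕ) (a : Fin d → ℝ) :
    MeasurePreserving (fun (x : Torus d) i => x i - ((a i : ℝ) : AddCircle (2 * π)))
      volume volume := by
  have : (fun (x : Torus d) i => x i - ((a i : ℝ) : AddCircle (2 * π)))
      = (fun x : Torus d => x - fun i => ((a i : ℝ) : AddCircle (2 * π))) := rfl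
  rw [this]
  exact measurePreserving_sub_right volume _

lemma volume_torusTranslate (d : ℕ) (M : Set (Torus d)) (hM : MeasurableSet M)
    (a : Fin d → ℝ) : volume (torusTranslate d M a) = volume M :=
  (torusTranslate_measurePreserving d a).measure_preimage hM.nullMeasurableSet

lemma Lam_eq_zero_iff (d : ℕ) (M : Set (Torus d)) (a : Fin d → ℝ) :
    Lam d M a = 0 ↔ volume (M \ torusTranslate d M a) = 0 := by
  rw [Lam, ENNReal.toReal_eq_zero_iff]
  have : volume (M \ torusTranslate d M a) ≠ ⊤ := measure_ne_top _ _
  tauto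

/-- For a measurable `M ⊆ T^d`, the set
`{a ∈ ℝ^d : Λ_M(κa) = 0 for all κ ∈ ℝ}` of vectors generating irrelevant directions is a
linear subspace of `ℝ^d`. -/
theorem irrelevant_directions_subspace (d : ℕ) (M : Set (Torus d)) (hM : MeasurableSet M) :
    ∃ S : Submodule ℝ (Fin d → ℝ),
      (S : Set (Fin d → ℝ)) = {a : Fin d → ℝ | ∀ κ : ℝ, Lam d M (κ • a) = 0} := by
  refine ⟨⟨⟨⟨{a : Fin d → ℝ | ∀ κ : ℝ, Lam d M (κ • a) = 0}, ?_⟩, ?_⟩, ?_⟩, rfl⟩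
  · -- add_mem
    rintro a b (ha : ∀ κ, _) (hb : ∀ κ, _) κ
    rw [Lam_eq_zero_iff]
    have hu := (Lam_eq_zero_iff d M (κ • a)).mp (ha κ)
    have hv := (Lam_eq_zero_iff d M (κ • b)).mp (hb κ)
    have key : κ • (a + b) = κ • a + κ • b := by rw [smul_add]
    rw [key, torusTranslate_add]
    set u := κ • a
    set v := κ • b
    have hsub : M \ torusTranslate d (torusTranslate d M v) u ⊆
        (M \ torusTranslate d M u) ∪
        (torusTranslate d M u \ torusTranslate d (torusTranslate d M v) u) := by
      intro x hx
      by_cases h : x ∈ torusTranslate d M u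
      · exact Or.inr ⟨h, hx.2⟩
      · exact Or.inl ⟨hx.1, h⟩
    refine le_antisymm (le_trans (measure_mono hsub) ?_) zero_le
    refine le_trans (measure_union_le _ _) ?_
    have h2 : torusTranslate d M u \ torusTranslate d (torusTranslate d M v) u
        = torusTranslate d (M \ torusTranslate d M v) u := rfl
    rw [h2, volume_torusTranslate d (M \ torusTranslate d M v)
      (hM.diff ((torusTranslate_measurePreserving d v).measurable hM)) u, hu, hv]
    simp
  · -- zero_mem
    intro κ
    rw [Lam_eq_zero_iff, smul_zero, torusTranslate_zero]
    simp
  · -- smul_mem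
    rintro c a (ha : ∀ κ, _) κ
    have : κ • (c • a) = (κ * c) • a := smul_smul κ c a
    rw [this]
    exact ha (κ * c)
end
end

section
/- Let M ⊆ T^d be measurable and let V ⊆ {v ∈ ℝ^d : ‖v‖ = 1} be a compact set of unit vectors each of which generates a relevant direction with respect to M. Then there exist σ > 0 and ε₋ > 0 such that Λ_M(v) ≥ σ·‖v‖ for every v ∈ ℝ^d with v/‖v‖ ∈ V and 0 < ‖v‖ < ε₋. -/
open MeasureTheory Real
open scoped symmDiff

noncomputable section

/-- The Euclidean norm on `ℝ^d`. -/
def euclNorm (d : ℕ) (v : Fin d → ℝ) : ℝ := Real.sqrt (∑ i, v i ^ 2)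

namespace Stmt11

variable (d : ℕ) (M : Set (Torus d))

/-- The projection `ℝ^d → T^d`. -/
def iota (a : Fin d → ℝ) : Torus d := fun i => ((a i : ℝ) : AddCircle (2 * π))

lemma iota_continuous : Continuous (iota d) :=
  continuous_pi fun i => (AddCircle.continuous_mk' _).comp (continuous_apply i)

lemma iota_add (a b : Fin d → ℝ) : iota d (a + b) = iota d a + iota d b := rfl

lemma iota_neg (a : Fin d → ℝ) : iota d (-a) = -iota d a := rfl

lemma torusTranslate_eq (a : Fin d → ℝ) :
    torusTranslate d M a = (fun x : Torus d => x - iota d a) ⁻¹' M := rfl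

lemma mp (t : Torus d) : MeasurePreserving (fun x : Torus d => x - t) volume volume :=
  measurePreserving_sub_right volume t

variable {M}

lemma translate_measurableSet (hM : MeasurableSet M) (a : Fin d → ℝ) : MeasurableSet (torusTranslate d M a) := by
  rw [torusTranslate_eq]
  exact hM.preimage (measurable_id.sub measurable_const)

lemma Lam_nonneg (a : Fin d → ℝ) : 0 ≤ Lam d M a := ENNReal.toReal_nonneg

lemma Lam_zero : Lam d M 0 = 0 := by
  have : torusTranslate d M 0 = M := by
    rw [torusTranslate_eq]
    have : iota d 0 = 0 := rfl
    simp [this]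
  simp [Lam, this]

lemma Lam_add_le (hM : MeasurableSet M) (a b : Fin d → ℝ) :
    Lam d M (a + b) ≤ Lam d M a + Lam d M b := by
  have hkey : torusTranslate d M b \ torusTranslate d M (a + b)
      = (fun x : Torus d => x - iota d b) ⁻¹' (M \ torusTranslate d M a) := by
    ext x
    simp only [torusTranslate_eq, Set.mem_diff, Set.mem_preimage, iota_add,
      sub_add_eq_sub_sub_swap]
  have hsub : M \ torusTranslate d M (a + b) ⊆
      (M \ torusTranslate d M b) ∪ (torusTranslate d M b \ torusTranslate d M (a + b)) := by
    intro x hx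
    by_cases hb : x ∈ torusTranslate d M b
    · exact Or.inr ⟨hb, hx.2⟩
    · exact Or.inl ⟨hx.1, hb⟩
  have h1 : volume (M \ torusTranslate d M (a + b)) ≤
      volume (M \ torusTranslate d M a) + volume (M \ torusTranslate d M b) := by
    calc volume (M \ torusTranslate d M (a + b))
        ≤ volume ((M \ torusTranslate d M b) ∪
            (torusTranslate d M b \ torusTranslate d M (a + b))) := measure_mono hsub
      _ ≤ volume (M \ torusTranslate d M b) +
            volume (torusTranslate d M b \ torusTranslate d M (a + b)) := measure_union_le _ _
      _ = volume (M \ torusTranslate d M b) + volume (M \ torusTranslate d M a) := by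
            rw [hkey, (mp d (iota d b)).measure_preimage
              ((hM.diff (translate_measurableSet d hM a)).nullMeasurableSet)]
      _ = _ := by ring
  have := ENNReal.toReal_mono (by finiteness) h1
  rwa [ENNReal.toReal_add (by finiteness) (by finiteness)] at this

lemma Lam_nsmul_le (hM : MeasurableSet M) (v : Fin d → ℝ) : ∀ n : ℕ, Lam d M (n • v) ≤ n * Lam d M v := by
  intro n
  induction n with
  | zero => simp [zero_nsmul, Lam_zero, Lam_nonneg]
  | succ n ih =>
      have : (n + 1) • v = n • v + v := by rw [add_nsmul, one_nsmul]
      rw [this]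
      calc Lam d M (n • v + v) ≤ Lam d M (n • v) + Lam d M v := Lam_add_le d hM _ _
        _ ≤ n * Lam d M v + Lam d M v := by linarith
        _ = (n + 1 : ℕ) * Lam d M v := by push_cast; ring

lemma Lam_neg (hM : MeasurableSet M) (v : Fin d → ℝ) : Lam d M (-v) = Lam d M v := by
  set S := torusTranslate d M v with hS
  have hSm : MeasurableSet S := translate_measurableSet d hM v
  have hpre : (fun x : Torus d => x - iota d v) ⁻¹' (M \ torusTranslate d M (-v))
      = S \ M := by
    ext x
    simp only [Set.mem_preimage, Set.mem_diff, torusTranslate_eq, iota_neg, sub_neg_eq_add,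
      sub_add_cancel, hS, Set.mem_preimage]
  have h1 : volume (M \ torusTranslate d M (-v)) = volume (S \ M) := by
    rw [← (mp d (iota d v)).measure_preimage
      ((hM.diff (translate_measurableSet d hM (-v))).nullMeasurableSet), hpre]
  have h2 : volume (S \ M) + volume (S ∩ M) = volume S := measure_diff_add_inter S hM
  have h3 : volume (M \ S) + volume (M ∩ S) = volume M := measure_diff_add_inter M hSm
  have h4 : volume S = volume M := (mp d (iota d v)).measure_preimage hM.nullMeasurableSet
  have h5 : volume (S \ M) = volume (M \ S) := by
    have heq : volume (S ∩ M) + volume (S \ M) = volume (S ∩ M) + volume (M \ S) := by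
      rw [add_comm (volume (S ∩ M)) (volume (S \ M)), h2, h4, Set.inter_comm, add_comm]
      exact h3.symm
    exact (ENNReal.add_right_inj (by finiteness)).mp heq
  simp only [Lam, h1, h5]
  rfl

/-! ### Continuity of `Lam` -/

lemma Lam_continuous (hM : MeasurableSet M) : Continuous (Lam d M) := by
  rw [continuous_iff_continuousAt]
  intro a₀
  have hcm : Continuous (fun a : Fin d → ℝ =>
      (⟨fun x : Torus d => x - iota d a, continuous_id.sub continuous_const⟩ :
        C(Torus d, Torus d))) := by
    apply ContinuousMap.continuous_of_continuous_uncurry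
    exact continuous_snd.sub ((iota_continuous d).comp continuous_fst)
  have htend := tendsto_measure_symmDiff_preimage_nhds_zero (μ := (volume : Measure (Torus d)))
    (ν := (volume : Measure (Torus d))) (hcm.tendsto a₀)
    (Filter.Eventually.of_forall fun a => mp d (iota d a)) (mp d (iota d a₀))
    hM.nullMeasurableSet (measure_ne_top _ _)
  have htr : Filter.Tendsto
      (fun a => (volume (torusTranslate d M a ∆ torusTranslate d M a₀)).toReal)
      (nhds a₀) (nhds 0) := by
    have h := (ENNReal.tendsto_toReal (a := 0) (by simp)).comp htend
    simpa [torusTranslate_eq, ContinuousMap.coe_mk, Function.comp_def] using h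
  rw [ContinuousAt, tendsto_iff_dist_tendsto_zero]
  refine squeeze_zero (fun a => dist_nonneg) (fun a => ?_) htr
  rw [Real.dist_eq]
  calc |Lam d M a - Lam d M a₀|
      ≤ (volume ((M \ torusTranslate d M a) ∆ (M \ torusTranslate d M a₀))).toReal := by
        apply abs_measureReal_sub_le_measureReal_symmDiff'
          ((hM.diff (translate_measurableSet d hM a)).nullMeasurableSet)
          ((hM.diff (translate_measurableSet d hM a₀)).nullMeasurableSet)
          (by finiteness) (by finiteness)
    _ ≤ (volume (torusTranslate d M a ∆ torusTranslate d M a₀)).toReal := by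
        apply ENNReal.toReal_mono (by finiteness)
        apply measure_mono
        intro x hx
        simp only [Set.mem_symmDiff, Set.mem_diff] at hx ⊢
        tauto

/-! ### Euclidean norm lemmas -/

lemma euclNorm_eq (v : Fin d → ℝ) :
    euclNorm d v = ‖(WithLp.equiv 2 (Fin d → ℝ)).symm v‖ := by
  rw [EuclideanSpace.norm_eq]
  simp [euclNorm, Real.norm_eq_abs, sq_abs]

lemma euclNorm_nonneg (v : Fin d → ℝ) : 0 ≤ euclNorm d v := Real.sqrt_nonneg _

lemma euclNorm_smul (c : ℝ) (v : Fin d → ℝ) : euclNorm d (c • v) = |c| * euclNorm d v := by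
  rw [euclNorm_eq, euclNorm_eq, WithLp.equiv_symm_apply, WithLp.toLp_smul, norm_smul, Real.norm_eq_abs]

lemma euclNorm_add_le (v w : Fin d → ℝ) :
    euclNorm d (v + w) ≤ euclNorm d v + euclNorm d w := by
  rw [euclNorm_eq, euclNorm_eq, euclNorm_eq, WithLp.equiv_symm_apply, WithLp.toLp_add]
  exact norm_add_le _ _

lemma abs_le_euclNorm (v : Fin d → ℝ) (i : Fin d) : |v i| ≤ euclNorm d v := by
  rw [euclNorm, ← Real.sqrt_sq_eq_abs]
  apply Real.sqrt_le_sqrt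
  exact Finset.single_le_sum (f := fun j => v j ^ 2) (fun j _ => sq_nonneg _)
    (Finset.mem_univ i)

lemma dist_le_euclNorm (a b : Fin d → ℝ) : dist a b ≤ euclNorm d (a - b) := by
  rw [dist_pi_le_iff (euclNorm_nonneg d _)]
  intro i
  rw [Real.dist_eq]
  exact abs_le_euclNorm d (a - b) i

lemma euclNorm_le_sqrt_mul (v : Fin d → ℝ) {r : ℝ} (hr : 0 ≤ r) (h : ∀ i, |v i| ≤ r) :
    euclNorm d v ≤ Real.sqrt d * r := by
  have : ∑ i, v i ^ 2 ≤ (d : ℝ) * r ^ 2 := by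
    calc ∑ i, v i ^ 2 ≤ ∑ _i : Fin d, r ^ 2 := by
          apply Finset.sum_le_sum
          intro i _
          rw [← sq_abs]
          exact pow_le_pow_left₀ (abs_nonneg _) (h i) 2
      _ = (d : ℝ) * r ^ 2 := by simp [Finset.card_univ]
  calc euclNorm d v ≤ Real.sqrt ((d : ℝ) * r ^ 2) := Real.sqrt_le_sqrt this
    _ = Real.sqrt d * r := by
        rw [Real.sqrt_mul (by positivity), Real.sqrt_sq hr]

lemma euclNorm_sub_le_dist (a b : Fin d → ℝ) :
    euclNorm d (a - b) ≤ Real.sqrt d * dist a b := by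
  apply euclNorm_le_sqrt_mul d _ dist_nonneg
  intro i
  have := dist_le_pi_dist a b i
  rwa [Real.dist_eq] at this

end Stmt11

/-- If `V` is a compact set of Euclidean unit vectors in `ℝ^d`, each
generating a relevant direction with respect to a measurable `M ⊆ T^d`, then there exist
`σ > 0` and `ε₋ > 0` such that `Λ_M(v) ≥ σ‖v‖` whenever `v/‖v‖ ∈ V` and `0 < ‖v‖ < ε₋`. -/
theorem Lam_uniform_linear_lower_bound (d : ℕ) (M : Set (Torus d)) (hM : MeasurableSet M)
    (V : Set (Fin d → ℝ)) (hVcompact : IsCompact V)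
    (hVunit : ∀ v ∈ V, euclNorm d v = 1)
    (hVrel : ∀ v ∈ V, ∃ κ : ℝ, Lam d M (κ • v) ≠ 0) :
    ∃ σ : ℝ, 0 < σ ∧ ∃ ε : ℝ, 0 < ε ∧
      ∀ v : Fin d → ℝ, (euclNorm d v)⁻¹ • v ∈ V → 0 < euclNorm d v → euclNorm d v < ε →
        σ * euclNorm d v ≤ Lam d M v := by
  classical
  have key : ∀ u ∈ V, ∃ κ c δ : ℝ, 0 < κ ∧ 0 < c ∧ 0 < δ ∧ δ ≤ 1 ∧
      ∀ a : Fin d → ℝ, euclNorm d (a - κ • u) < δ → c ≤ Lam d M a := by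
    intro u hu
    obtain ⟨κ₀, hκ₀⟩ := hVrel u hu
    have hκ₀ne : κ₀ ≠ 0 := by
      rintro rfl
      apply hκ₀
      simpa [zero_smul] using Stmt11.Lam_zero d (M := M)
    have hpos0 : 0 < Lam d M (κ₀ • u) :=
      lt_of_le_of_ne (Stmt11.Lam_nonneg d _) (Ne.symm hκ₀)
    set κ := |κ₀| with hκdef
    have hκpos : 0 < κ := abs_pos.mpr hκ₀ne
    have hLκ : Lam d M (κ • u) = Lam d M (κ₀ • u) := by
      rcases abs_cases κ₀ with ⟨h, _⟩ | ⟨h, _⟩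
      · rw [hκdef, h]
      · rw [hκdef, h, neg_smul]
        exact Stmt11.Lam_neg d hM _
    have hcpos : 0 < Lam d M (κ • u) / 2 := by rw [hLκ]; positivity
    have hcont := (Stmt11.Lam_continuous d hM).continuousAt (x := κ • u)
    rw [Metric.continuousAt_iff] at hcont
    obtain ⟨δ₀, hδ₀, hball⟩ := hcont (Lam d M (κ • u) / 2) hcpos
    refine ⟨κ, Lam d M (κ • u) / 2, min δ₀ 1, hκpos, hcpos, by positivity,
      min_le_right _ _, ?_⟩
    intro a ha
    have hd : dist a (κ • u) < δ₀ :=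
      lt_of_le_of_lt (Stmt11.dist_le_euclNorm d a (κ • u))
        (lt_of_lt_of_le ha (min_le_left _ _))
    have h2 := hball hd
    rw [Real.dist_eq] at h2
    have h3 := abs_lt.mp h2
    linarith [h3.1]
  choose! κ c δ hκ hc hδ hδ1 hcont using key
  set r : (Fin d → ℝ) → ℝ := fun u => δ u / (2 * (κ u + 1) * (Real.sqrt d + 1)) with hr
  have hrpos : ∀ u ∈ V, 0 < r u := by
    intro u hu
    exact div_pos (hδ u hu) (by nlinarith [Real.sqrt_nonneg (d:ℝ), hκ u hu])
  obtain ⟨s, hsV, hcover⟩ := hVcompact.elim_nhds_subcover (fun u => Metric.ball u (r u))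
    (fun u hu => Metric.ball_mem_nhds u (hrpos u hu))
  by_cases hs : s.Nonempty
  case neg =>
    refine ⟨1, one_pos, 1, one_pos, ?_⟩
    intro v hv _ _
    exfalso
    have h := hcover hv
    rw [Finset.not_nonempty_iff_eq_empty] at hs
    simp [hs] at h
  case pos =>
  refine ⟨s.inf' hs (fun u => c u / (κ u + 1)), ?_,
    min 1 (s.inf' hs (fun u => δ u / 2)), ?_, ?_⟩
  · rw [Finset.lt_inf'_iff]
    intro u hus
    have huV := hsV u hus
    exact div_pos (hc u huV) (by linarith [hκ u huV])
  · refine lt_min one_pos ?_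
    rw [Finset.lt_inf'_iff]
    intro u hus
    linarith [hδ u (hsV u hus)]
  · intro v hw hpos hlt
    set t := euclNorm d v with ht
    set w := t⁻¹ • v with hwdef
    have hvw : v = t • w := by
      rw [hwdef, smul_smul, mul_inv_cancel₀ hpos.ne', one_smul]
    have hNw : euclNorm d w = 1 := hVunit w hw
    clear_value w
    obtain ⟨u, hus, hball⟩ : ∃ u ∈ s, w ∈ Metric.ball u (r u) := by
      have h := hcover hw
      simpa using h
    have huV := hsV u hus
    have hκu := hκ u huV
    have hcu := hc u huV
    have hδu := hδ u huV
    have ht1 : t < 1 := lt_of_lt_of_le hlt (min_le_left _ _)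
    have htδ : t < δ u / 2 :=
      lt_of_lt_of_le hlt ((min_le_right _ _).trans (Finset.inf'_le _ hus))
    set n := ⌈κ u / t⌉₊ with hn
    have hn1 : 0 < n := Nat.ceil_pos.mpr (div_pos hκu hpos)
    have hnR : (0:ℝ) < n := by exact_mod_cast hn1
    have hge : κ u ≤ n * t := by
      rw [← div_le_iff₀ hpos]
      exact Nat.le_ceil _
    have hltn : (n:ℝ) * t < κ u + t := by
      have h1 : (n:ℝ) < κ u / t + 1 := Nat.ceil_lt_add_one (by positivity)
      calc (n:ℝ) * t < (κ u / t + 1) * t := by nlinarith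
        _ = κ u + t := by field_simp
    have hNwu : euclNorm d (w - u) ≤ Real.sqrt d * r u := by
      have h1 := Stmt11.euclNorm_sub_le_dist d w u
      have hb : dist w u < r u := Metric.mem_ball.mp hball
      nlinarith [Real.sqrt_nonneg (d:ℝ)]
    have hA : euclNorm d ((n:ℝ) • v - κ u • u) < δ u := by
      have hdecomp : (n:ℝ) • v - κ u • u = ((n:ℝ) * t - κ u) • w + κ u • (w - u) := by
        rw [hvw]; module
      rw [hdecomp]
      have h1 : euclNorm d (((n:ℝ) * t - κ u) • w + κ u • (w - u)) ≤
          |(n:ℝ) * t - κ u| * euclNorm d w + |κ u| * euclNorm d (w - u) := by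
        calc euclNorm d (((n:ℝ) * t - κ u) • w + κ u • (w - u))
            ≤ euclNorm d (((n:ℝ) * t - κ u) • w) + euclNorm d (κ u • (w - u)) :=
              Stmt11.euclNorm_add_le d _ _
          _ = _ := by rw [Stmt11.euclNorm_smul, Stmt11.euclNorm_smul]
      have h2 : |(n:ℝ) * t - κ u| = (n:ℝ) * t - κ u := abs_of_nonneg (by linarith)
      have h3 : |κ u| = κ u := abs_of_pos hκu
      have h4 : κ u * euclNorm d (w - u) ≤ δ u / 2 := by
        have h5 : κ u * (Real.sqrt d * r u) ≤ δ u / 2 := by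
          simp only [hr]
          set q := Real.sqrt (d:ℝ) with hq
          have hq0 : 0 ≤ q := Real.sqrt_nonneg _
          have hD : (0:ℝ) < 2 * (κ u + 1) * (q + 1) := by nlinarith
          have heq : κ u * (q * (δ u / (2 * (κ u + 1) * (q + 1))))
              = κ u * q * δ u / (2 * (κ u + 1) * (q + 1)) := by ring
          rw [heq, div_le_div_iff₀ hD two_pos]
          nlinarith [mul_nonneg (mul_nonneg hκu.le hq0) hδu.le]
        nlinarith [Stmt11.euclNorm_nonneg d (w - u)]
      calc euclNorm d (((n:ℝ) * t - κ u) • w + κ u • (w - u))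
          ≤ |(n:ℝ) * t - κ u| * euclNorm d w + |κ u| * euclNorm d (w - u) := h1
        _ = ((n:ℝ) * t - κ u) * 1 + κ u * euclNorm d (w - u) := by rw [h2, h3, hNw]
        _ < δ u / 2 + δ u / 2 := by
            apply add_lt_add_of_lt_of_le
            · linarith
            · exact h4
        _ = δ u := by ring
    have hc1 : c u ≤ Lam d M (n • v) := by
      have h := hcont u huV ((n:ℝ) • v) hA
      rwa [Nat.cast_smul_eq_nsmul] at h
    have hc2 : Lam d M (n • v) ≤ n * Lam d M v := Stmt11.Lam_nsmul_le d hM v n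
    have hLv : c u / n ≤ Lam d M v := by
      rw [div_le_iff₀ hnR]
      calc c u ≤ (n:ℝ) * Lam d M v := le_trans hc1 hc2
        _ = Lam d M v * n := by ring
    have hnt : (n:ℝ) * t ≤ κ u + 1 := by linarith
    have hfrac : c u / (κ u + 1) * t ≤ c u / n := by
      rw [div_mul_eq_mul_div, div_le_div_iff₀ (by linarith) hnR]
      calc c u * t * n = c u * ((n:ℝ) * t) := by ring
        _ ≤ c u * (κ u + 1) := by nlinarith
    calc s.inf' hs (fun u => c u / (κ u + 1)) * t ≤ c u / (κ u + 1) * t :=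
          mul_le_mul_of_nonneg_right (Finset.inf'_le _ hus) hpos.le
      _ ≤ c u / n := hfrac
      _ ≤ Lam d M v := hLv
end
end

section
/- Let M ⊆ T^d be measurable, let 1 ≤ m ≤ d, and suppose each of the standard basis vectors e_1, …, e_m of ℝ^d generates a relevant direction with respect to M. Then there exists a choice of signs s_1, …, s_m ∈ {+1, −1} such that every nonzero vector of the form Σ_{i=1}^m a_i s_i e_i with all a_i ≥ 0 generates a relevant direction with respect to M. -/
open MeasureTheory Real

noncomputable section

/-- The `i`-th standard basis vector of `ℝ^d`. -/
def stdBasis (d : ℕ) (i : Fin d) : Fin d → ℝ := Pi.single i 1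

/-- Translation preserves the measure on the torus. -/
lemma torus_measure_preimage (d : ℕ) (a : Fin d → ℝ) (S : Set (Torus d)) :
    volume ((fun (x : Torus d) i => x i - ((a i : ℝ) : AddCircle (2*π))) ⁻¹' S) = volume S := by
  have : (fun (x : Torus d) i => x i - ((a i : ℝ) : AddCircle (2*π)))
      = (fun x => (fun i => -((a i : ℝ) : AddCircle (2*π))) + x) := by
    funext x; funext i; simp [sub_eq_neg_add, add_comm]
  rw [this, measure_preimage_add]

lemma torusTranslate_add_s12 (d : ℕ) (M : Set (Torus d)) (a b : Fin d → ℝ) :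
    torusTranslate d M (a + b)
      = (fun (x : Torus d) i => x i - ((a i : ℝ) : AddCircle (2*π))) ⁻¹'
          (torusTranslate d M b) := by
  unfold torusTranslate
  rw [← Set.preimage_comp]
  have : (fun (x : Torus d) i => x i - (((a + b) i : ℝ) : AddCircle (2*π)))
      = (fun (x : Torus d) i => x i - ((b i : ℝ) : AddCircle (2*π))) ∘
        (fun (x : Torus d) i => x i - ((a i : ℝ) : AddCircle (2*π))) := by
    funext x
    funext i
    show x i - ((a i + b i : ℝ) : AddCircle (2*π)) = (x i - (a i : ℝ)) - (b i : ℝ)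
    simp [AddCircle.coe_add, sub_sub]
  rw [this]

/-- Subadditivity of the (measure-valued) `Λ`. -/
lemma lam_subadd (d : ℕ) (M : Set (Torus d)) (a b : Fin d → ℝ) :
    volume (M \ torusTranslate d M (a + b))
      ≤ volume (M \ torusTranslate d M a) + volume (M \ torusTranslate d M b) := by
  set f := fun (x : Torus d) i => x i - ((a i : ℝ) : AddCircle (2*π)) with hf
  have hsub : M \ torusTranslate d M (a + b)
      ⊆ (M \ torusTranslate d M a) ∪ (f ⁻¹' (M \ torusTranslate d M b)) := by
    intro x hx
    by_cases hxa : x ∈ torusTranslate d M a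
    · right
      rw [Set.preimage_diff]
      constructor
      · exact hxa
      · intro hx'
        exact hx.2 ((torusTranslate_add_s12 d M a b) ▸ hx')
    · exact Or.inl ⟨hx.1, hxa⟩
  calc volume (M \ torusTranslate d M (a + b))
      ≤ volume ((M \ torusTranslate d M a) ∪ (f ⁻¹' (M \ torusTranslate d M b))) :=
        measure_mono hsub
    _ ≤ volume (M \ torusTranslate d M a) + volume (f ⁻¹' (M \ torusTranslate d M b)) :=
        measure_union_le _ _
    _ = volume (M \ torusTranslate d M a) + volume (M \ torusTranslate d M b) := by
        rw [torus_measure_preimage]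

/-- The set of vectors all of whose multiples leave `M` almost invariant is a submodule. -/
def irrSubmodule (d : ℕ) (M : Set (Torus d)) : Submodule ℝ (Fin d → ℝ) where
  carrier := {v | ∀ κ : ℝ, volume (M \ torusTranslate d M (κ • v)) = 0}
  zero_mem' := by
    intro κ
    rw [smul_zero, torusTranslate_zero]
    simp
  add_mem' := by
    intro v w hv hw κ
    have h := lam_subadd d M (κ • v) (κ • w)
    rw [← smul_add] at h
    have := le_trans h (by rw [hv κ, hw κ, add_zero])
    exact le_antisymm this zero_le
  smul_mem' := by
    intro c v hv κ
    rw [smul_smul]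
    exact hv (κ * c)

theorem exists_signs_positive_cone_relevant (d m : ℕ) (hm : 1 ≤ m) (hmd : m ≤ d)
    (M : Set (Torus d)) (hM : MeasurableSet M)
    (hrel : ∀ i : Fin d, (i : ℕ) < m → ∃ κ : ℝ, Lam d M (κ • stdBasis d i) ≠ 0) :
    ∃ s : Fin d → ℝ, (∀ i : Fin d, s i = 1 ∨ s i = -1) ∧
      ∀ a : Fin d → ℝ, (∀ i, 0 ≤ a i) → (∀ i : Fin d, m ≤ (i : ℕ) → a i = 0) →
        (∑ i, (a i * s i) • stdBasis d i) ≠ 0 →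
        ∃ κ : ℝ, Lam d M (κ • ∑ i, (a i * s i) • stdBasis d i) ≠ 0 := by
  set W := irrSubmodule d M with hW
  -- basis vectors with index < m are not in W
  have hnotW : ∀ i : Fin d, (i : ℕ) < m → stdBasis d i ∉ W := by
    intro i him hmem
    obtain ⟨κ, hκ⟩ := hrel i him
    apply hκ
    unfold Lam
    rw [hmem κ]
    simp
  -- construct a functional vanishing on W and nonzero on the first m basis vectors
  have key : ∀ k : ℕ, ∃ f : Module.Dual ℝ (Fin d → ℝ),
      (∀ v ∈ W, f v = 0) ∧ ∀ i : Fin d, (i : ℕ) < min k m → f (stdBasis d i) ≠ 0 := by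
    intro k
    induction k with
    | zero => exact ⟨0, fun v _ => rfl, fun i hi => by simp at hi⟩
    | succ k ih =>
      obtain ⟨f, hf0, hf⟩ := ih
      by_cases hkm : m ≤ k
      · refine ⟨f, hf0, fun i hi => hf i ?_⟩
        omega
      · push_neg at hkm
        have hkd : k < d := lt_of_lt_of_le hkm hmd
        have hnot : stdBasis d ⟨k, hkd⟩ ∉ W := hnotW ⟨k, hkd⟩ hkm
        obtain ⟨g, hg, hgbot⟩ := Submodule.exists_dual_map_eq_bot_of_notMem hnot inferInstance
        have hg0 : ∀ v ∈ W, g v = 0 := by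
          intro v hv
          have hmem : g v ∈ Submodule.map g W := Submodule.mem_map_of_mem hv
          rw [hgbot] at hmem
          exact (Submodule.mem_bot ℝ).mp hmem
        -- choose c avoiding finitely many bad values
        have hfin : (Set.range (fun i : Fin d => -(f (stdBasis d i)) / g (stdBasis d i))).Finite :=
          Set.finite_range _
        obtain ⟨c, hc⟩ := hfin.infinite_compl.nonempty
        refine ⟨f + c • g, ?_, ?_⟩
        · intro v hv
          simp [hf0 v hv, hg0 v hv]
        · intro i hi
          have hgen : g (stdBasis d i) ≠ 0 ∨ f (stdBasis d i) ≠ 0 := by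
            by_cases hik : (i : ℕ) = k
            · left
              have : i = ⟨k, hkd⟩ := Fin.ext hik
              rw [this]; exact hg
            · right
              apply hf
              omega
          have hcne : c ≠ -(f (stdBasis d i)) / g (stdBasis d i) := by
            intro hceq
            exact hc ⟨i, hceq.symm⟩
          show f (stdBasis d i) + c * g (stdBasis d i) ≠ 0
          rcases hgen with hgne | hfne
          · intro habs
            apply hcne
            field_simp
            linarith
          · by_cases hgz : g (stdBasis d i) = 0
            · simpa [hgz] using hfne
            · intro habs
              apply hcne
              field_simp
              linarith
  obtain ⟨f, hf0, hf⟩ := key m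
  have hfm : ∀ i : Fin d, (i : ℕ) < m → f (stdBasis d i) ≠ 0 := by
    intro i hi; exact hf i (by omega)
  refine ⟨fun i => if f (stdBasis d i) < 0 then -1 else 1, fun i => by
    by_cases h : f (stdBasis d i) < 0 <;> simp [h], ?_⟩
  intro a ha0 ham hne
  set s : Fin d → ℝ := fun i => if f (stdBasis d i) < 0 then -1 else 1 with hs
  set u : Fin d → ℝ := ∑ i, (a i * s i) • stdBasis d i with hu
  -- positivity of each term
  have hterm : ∀ i : Fin d, 0 ≤ a i * s i * f (stdBasis d i) := by
    intro i
    by_cases him : (i : ℕ) < m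
    · have hpos : 0 < s i * f (stdBasis d i) := by
        rcases lt_or_ge (f (stdBasis d i)) 0 with h | h
        · simp only [hs, if_pos h]; nlinarith
        · have : f (stdBasis d i) ≠ 0 := hfm i him
          have h' : 0 < f (stdBasis d i) := lt_of_le_of_ne h (Ne.symm this)
          simp only [hs, if_neg (not_lt.mpr h)]; linarith
      have := ha0 i
      nlinarith
    · rw [ham i (by omega)]; ring_nf; simp
  -- there is at least one strictly positive term
  have hex : ∃ j : Fin d, 0 < a j * s j * f (stdBasis d j) := by
    by_contra hno
    push_neg at hno
    apply hne
    have hall : ∀ i : Fin d, a i = 0 := by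
      intro i
      by_cases him : (i : ℕ) < m
      · by_contra hai
        have hpos : 0 < a i := lt_of_le_of_ne (ha0 i) (Ne.symm hai)
        have hpos' : 0 < s i * f (stdBasis d i) := by
          rcases lt_or_ge (f (stdBasis d i)) 0 with h | h
          · simp only [hs, if_pos h]; nlinarith
          · have : f (stdBasis d i) ≠ 0 := hfm i him
            have h' : 0 < f (stdBasis d i) := lt_of_le_of_ne h (Ne.symm this)
            simp only [hs, if_neg (not_lt.mpr h)]; linarith
        have := hno i
        nlinarith
      · exact ham i (by omega)
    apply Finset.sum_eq_zero
    intro i _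
    rw [hall i]
    simp
  -- hence f u > 0
  have hfu : 0 < f u := by
    rw [hu, map_sum]
    have : ∀ i : Fin d, f ((a i * s i) • stdBasis d i) = a i * s i * f (stdBasis d i) := by
      intro i; rw [LinearMap.map_smul]; rfl
    rw [Finset.sum_congr rfl (fun i _ => this i)]
    obtain ⟨j, hj⟩ := hex
    exact Finset.sum_pos' (fun i _ => hterm i) ⟨j, Finset.mem_univ j, hj⟩
  -- so u ∉ W, i.e. some multiple of u is relevant
  have hunotW : u ∉ W := fun hmem => (ne_of_gt hfu) (hf0 u hmem)
  have : ∃ κ : ℝ, volume (M \ torusTranslate d M (κ • u)) ≠ 0 := by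
    by_contra hno
    push_neg at hno
    exact hunotW hno
  obtain ⟨κ, hκ⟩ := this
  refine ⟨κ, ?_⟩
  unfold Lam
  rw [ENNReal.toReal_ne_zero]
  exact ⟨hκ, measure_ne_top _ _⟩
end
end
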